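/- Let f : (a, ∞) → ℝ be a function that is monotone decreasing and midpoint-style convex over the rationals, i.e., f(t·x + (1−t)·y) ≤ t·f(x) + (1−t)·f(y) for all x, y in (a, ∞) ∩ ℚ and all t ∈ [0,1] ∩ ℚ. Suppose moreover that for each x ∈ (a, ∞) there exist ε > 0 and L > 0 such that 0 ≤ f(v) − f(u) ≤ L(u − v) for all rationals u, v ∈ (x − ε, x + ε) with u ≥ v. Then f is continuous on (a, ∞). -/

import Mathlib

/-- A monotone decreasing function on (a, ∞) (a ∈ ℝ ∪ {−∞}),
convex over the rationals, and locally Lipschitz on rational points,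
is continuous on (a, ∞). -/
theorem stmt_0 (a : EReal) (f : ℝ → ℝ)
    (S : Set ℝ) (hS : S = {x : ℝ | a < (x : EReal)})
    (hmono : ∀ x ∈ S, ∀ y ∈ S, x ≤ y → f y ≤ f x)
    (hconv : ∀ x ∈ S, ∀ y ∈ S, (∃ qx : ℚ, (qx : ℝ) = x) → (∃ qy : ℚ, (qy : ℝ) = y) →
      ∀ t : ℚ, 0 ≤ (t : ℝ) → (t : ℝ) ≤ 1 →
        f ((t : ℝ) * x + (1 - (t : ℝ)) * y) ≤ (t : ℝ) * f x + (1 - (t : ℝ)) * f y)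
    (hlip : ∀ x ∈ S, ∃ ε > (0 : ℝ), ∃ L > (0 : ℝ),
      ∀ u v : ℚ, (u : ℝ) ∈ Set.Ioo (x - ε) (x + ε) → (v : ℝ) ∈ Set.Ioo (x - ε) (x + ε) →
        (v : ℝ) ≤ (u : ℝ) →
          0 ≤ f v - f u ∧ f v - f u ≤ L * ((u : ℝ) - (v : ℝ))) :
    ContinuousOn f S := by
  have hSopen : IsOpen S := by
    rw [hS]
    exact isOpen_lt continuous_const continuous_coe_real_ereal
  intro x hx
  obtain ⟨ε, hε, L, hL, hLip⟩ := hlip x hx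
  obtain ⟨δ, hδ, hball⟩ := Metric.isOpen_iff.1 hSopen x hx
  set η := min ε δ / 2 with hη
  have hη0 : 0 < η := by positivity
  have hηε : η ≤ ε / 2 := by
    have := min_le_left ε δ; rw [hη]; linarith
  have hηδ : η ≤ δ / 2 := by
    have := min_le_right ε δ; rw [hη]; linarith
  set I := Set.Ioo (x - η) (x + η) with hI
  have hIS : ∀ y ∈ I, y ∈ S := by
    intro y hy
    apply hball
    rw [Metric.mem_ball, Real.dist_eq, abs_lt]
    exact ⟨by linarith [hy.1], by linarith [hy.2]⟩
  have hIε : ∀ y ∈ I, y ∈ Set.Ioo (x - ε) (x + ε) := by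
    intro y hy
    exact ⟨by linarith [hy.1], by linarith [hy.2]⟩
  -- key estimate: f is L-Lipschitz on I
  have key : ∀ y ∈ I, ∀ z ∈ I, y ≤ z → f y - f z ≤ L * (z - y) := by
    intro y hy z hz hyz
    refine le_of_forall_pos_le_add ?_
    intro c hc
    set d := c / (2 * L) with hd
    have hd0 : 0 < d := by positivity
    obtain ⟨v, hv1, hv2⟩ :=
      exists_rat_btwn (max_lt hy.1 (by linarith : y - d < y))
    obtain ⟨u, hu1, hu2⟩ :=
      exists_rat_btwn (lt_min hz.2 (by linarith : z < z + d))
    have hv1a : x - η < (v : ℝ) := lt_of_le_of_lt (le_max_left _ _) hv1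
    have hv1b : y - d < (v : ℝ) := lt_of_le_of_lt (le_max_right _ _) hv1
    have hu2a : (u : ℝ) < x + η := lt_of_lt_of_le hu2 (min_le_left _ _)
    have hu2b : (u : ℝ) < z + d := lt_of_lt_of_le hu2 (min_le_right _ _)
    have hvI : (v : ℝ) ∈ I := ⟨hv1a, by linarith [hy.2]⟩
    have huI : (u : ℝ) ∈ I := ⟨by linarith [hz.1], hu2a⟩
    have hvu : (v : ℝ) ≤ (u : ℝ) := by linarith
    have h1 : f y ≤ f v := hmono _ (hIS _ hvI) _ (hIS _ hy) (le_of_lt hv2)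
    have h2 : f u ≤ f z := hmono _ (hIS _ hz) _ (hIS _ huI) (le_of_lt hu1)
    have h3 := (hLip u v (hIε _ huI) (hIε _ hvI) hvu).2
    have hdL : L * d = c / 2 := by
      field_simp [hd]
      rw [hd]; field_simp
    nlinarith [hL.le]
  have hlipOn : LipschitzOnWith (Real.toNNReal L) f I := by
    rw [lipschitzOnWith_iff_dist_le_mul]
    intro y hy z hz
    rw [Real.dist_eq, Real.dist_eq, Real.coe_toNNReal L hL.le]
    rcases le_total y z with h | h
    · have k1 := key y hy z hz h
      have k2 : f z ≤ f y := hmono _ (hIS _ hy) _ (hIS _ hz) h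
      rw [abs_sub_comm y z, abs_of_nonneg (by linarith : (0:ℝ) ≤ z - y)]
      rw [abs_of_nonneg (by linarith : (0:ℝ) ≤ f y - f z)]
      exact k1
    · have k1 := key z hz y hy h
      have k2 : f y ≤ f z := hmono _ (hIS _ hz) _ (hIS _ hy) h
      rw [abs_of_nonneg (by linarith : (0:ℝ) ≤ y - z)]
      rw [abs_sub_comm (f y) (f z), abs_of_nonneg (by linarith : (0:ℝ) ≤ f z - f y)]
      exact k1
  have hxI : x ∈ I := ⟨by linarith, by linarith⟩
  have hInhds : I ∈ nhds x := (isOpen_Ioo).mem_nhds hxI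
  exact (hlipOn.continuousOn.continuousAt hInhds).continuousWithinAt
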